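/- Fix κ with 0 < κ < π/2. Let h : ℝ → ℝ be the Vow (variance-optimal wavelet) radial profile: h(ω) = √(1/2 + tan(κ(1 + 2·log₂(2ω/π)))/(2·tan κ)) for π/4 ≤ ω < π/2, h(ω) = √(1/2 − tan(κ(1 + 2·log₂(ω/π)))/(2·tan κ)) for π/2 ≤ ω ≤ π, and h(ω) = 0 otherwise. Then h satisfies the dyadic Riesz partition of unity: for every ω > 0, ∑_{i ∈ ℤ} h(2^i ω)² = 1. -/

import Mathlib

open Real

/-- The Vow (variance-optimal wavelet) radial profile satisfies the dyadic
Riesz partition of unity. -/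
theorem vow_riesz_partition_of_unity
    (κ : ℝ) (hκ₀ : 0 < κ) (hκ₁ : κ < π / 2)
    (h : ℝ → ℝ)
    (hdef : ∀ ω : ℝ,
      h ω =
        if π / 4 ≤ ω ∧ ω < π / 2 then
          Real.sqrt (1 / 2 + Real.tan (κ * (1 + 2 * Real.logb 2 (2 * ω / π))) / (2 * Real.tan κ))
        else if π / 2 ≤ ω ∧ ω ≤ π then
          Real.sqrt (1 / 2 - Real.tan (κ * (1 + 2 * Real.logb 2 (ω / π))) / (2 * Real.tan κ))
        else 0) :
    ∀ ω : ℝ, 0 < ω → ∑' i : ℤ, (h ((2 : ℝ) ^ i * ω)) ^ 2 = 1 := by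
  have hπ := Real.pi_pos
  have htκ : 0 < Real.tan κ := Real.tan_pos_of_pos_of_lt_pi_div_two hκ₀ hκ₁
  -- h vanishes outside [π/4, π)
  have hzero : ∀ x : ℝ, x < π / 4 ∨ π ≤ x → h x = 0 := by
    intro x hx
    rw [hdef]
    rcases hx with hx | hx
    · rw [if_neg, if_neg]
      · rintro ⟨h1, -⟩; linarith
      · rintro ⟨h1, -⟩; linarith
    · rcases eq_or_lt_of_le hx with heq | hlt
      · rw [if_neg, if_pos ⟨by linarith, le_of_eq heq.symm⟩]
        · rw [← heq, div_self hπ.ne', Real.logb_one]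
          have : Real.tan κ / (2 * Real.tan κ) = 1 / 2 := by
            field_simp
          norm_num [this]
        · rintro ⟨-, h2⟩; linarith
      · rw [if_neg, if_neg]
        · rintro ⟨-, h2⟩; linarith
        · rintro ⟨-, h2⟩; linarith
  intro ω hω
  -- locate the dyadic scale
  set a := Real.logb 2 (π / 4 / ω) with ha
  set n := ⌈a⌉ with hn
  have hpos : (0 : ℝ) < π / 4 / ω := by positivity
  have h1 : π / 4 / ω ≤ (2 : ℝ) ^ n := by
    calc π / 4 / ω = (2 : ℝ) ^ a := (Real.rpow_logb two_pos (by norm_num) hpos).symm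
      _ ≤ (2 : ℝ) ^ ((n : ℤ) : ℝ) :=
        Real.rpow_le_rpow_of_exponent_le one_le_two (Int.le_ceil a)
      _ = (2 : ℝ) ^ n := Real.rpow_intCast 2 n
  have h2 : (2 : ℝ) ^ n < π / 2 / ω := by
    calc (2 : ℝ) ^ n = (2 : ℝ) ^ ((n : ℤ) : ℝ) := (Real.rpow_intCast 2 n).symm
      _ < (2 : ℝ) ^ (a + 1) :=
        Real.rpow_lt_rpow_of_exponent_lt one_lt_two (by exact_mod_cast Int.ceil_lt_add_one a)
      _ = (2 : ℝ) ^ a * 2 := by rw [Real.rpow_add two_pos, Real.rpow_one]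
      _ = π / 4 / ω * 2 := by rw [Real.rpow_logb two_pos (by norm_num) hpos]
      _ = π / 2 / ω := by ring
  have hx1 : π / 4 ≤ (2 : ℝ) ^ n * ω := by
    rw [div_le_iff₀ hω] at h1; linarith
  have hx2 : (2 : ℝ) ^ n * ω < π / 2 := by
    rw [lt_div_iff₀ hω] at h2; linarith
  -- the only possibly nonzero terms are n and n+1
  have hsupp : ∀ i : ℤ, i ∉ ({n, n + 1} : Finset ℤ) → (h ((2 : ℝ) ^ i * ω)) ^ 2 = 0 := by
    intro i hi
    simp only [Finset.mem_insert, Finset.mem_singleton] at hi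
    push_neg at hi
    have hcase : i ≤ n - 1 ∨ n + 2 ≤ i := by omega
    rcases hcase with hc | hc
    · have hle : (2 : ℝ) ^ i ≤ (2 : ℝ) ^ (n - 1) := zpow_le_zpow_right₀ one_le_two hc
      have h2n : (2 : ℝ) ^ (n - 1) = (2 : ℝ) ^ n / 2 := by
        rw [zpow_sub₀ (two_ne_zero), zpow_one]
      have : (2 : ℝ) ^ i * ω < π / 4 := by
        have := mul_le_mul_of_nonneg_right hle hω.le
        rw [h2n] at this
        nlinarith
      rw [hzero _ (Or.inl this)]
      norm_num
    · have hle : (2 : ℝ) ^ (n + 2) ≤ (2 : ℝ) ^ i := zpow_le_zpow_right₀ one_le_two hc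
      have h2n : (2 : ℝ) ^ (n + 2) = (2 : ℝ) ^ n * 4 := by
        rw [zpow_add₀ (two_ne_zero)]; norm_num
      have : π ≤ (2 : ℝ) ^ i * ω := by
        have := mul_le_mul_of_nonneg_right hle hω.le
        rw [h2n] at this
        nlinarith
      rw [hzero _ (Or.inr this)]
      norm_num
    
  rw [tsum_eq_sum hsupp, Finset.sum_pair (by omega : n ≠ n + 1)]
  -- now compute the two remaining terms
  set x := (2 : ℝ) ^ n * ω with hxdef
  have hx2n : (2 : ℝ) ^ (n + 1) * ω = 2 * x := by
    rw [hxdef, zpow_add₀ (two_ne_zero), zpow_one]; ring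
  set l := Real.logb 2 (2 * x / π) with hl
  have hxpos : 0 < x := by positivity
  have hl0 : l < 0 := by
    apply Real.logb_neg one_lt_two (by positivity)
    rw [div_lt_one hπ]; linarith
  have hl1 : -1 ≤ l := by
    rw [hl, Real.le_logb_iff_rpow_le one_lt_two (by positivity)]
    rw [Real.rpow_neg_one]
    rw [le_div_iff₀ hπ]
    norm_num
    linarith
  set θ := κ * (1 + 2 * l) with hθ
  have hθ1 : -κ ≤ θ := by nlinarith
  have hθ2 : θ < κ := by nlinarith
  have hθmem : θ ∈ Set.Ioo (-(π / 2)) (π / 2) := ⟨by linarith, by linarith⟩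
  have hκmem : κ ∈ Set.Ioo (-(π / 2)) (π / 2) := ⟨by linarith, hκ₁⟩
  have hκmem' : -κ ∈ Set.Ioo (-(π / 2)) (π / 2) := ⟨by linarith, by linarith⟩
  have htlt : Real.tan θ < Real.tan κ := Real.strictMonoOn_tan hθmem hκmem hθ2
  have htge : -Real.tan κ ≤ Real.tan θ := by
    have := Real.strictMonoOn_tan.monotoneOn hκmem' hθmem hθ1
    rwa [Real.tan_neg] at this
  have h2t : (0 : ℝ) < 2 * Real.tan κ := by linarith
  have hA : 0 ≤ 1 / 2 + Real.tan θ / (2 * Real.tan κ) := by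
    have : -(1 / 2 : ℝ) ≤ Real.tan θ / (2 * Real.tan κ) := by
      rw [le_div_iff₀ h2t]; nlinarith
    linarith
  have hB : 0 ≤ 1 / 2 - Real.tan θ / (2 * Real.tan κ) := by
    have : Real.tan θ / (2 * Real.tan κ) ≤ 1 / 2 := by
      rw [div_le_iff₀ h2t]; nlinarith
    linarith
  have hhx : h x = Real.sqrt (1 / 2 + Real.tan θ / (2 * Real.tan κ)) := by
    rw [hdef, if_pos ⟨hx1, hx2⟩]
  have hh2x : h ((2 : ℝ) ^ (n + 1) * ω) =
      Real.sqrt (1 / 2 - Real.tan θ / (2 * Real.tan κ)) := by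
    rw [hx2n, hdef, if_neg, if_pos ⟨by linarith, by linarith⟩]
    · rintro ⟨-, hc⟩; linarith
  rw [hhx, hh2x, Real.sq_sqrt hA, Real.sq_sqrt hB]
  ring
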